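/- Let b ≥ 2 be an integer, X a nonempty set of positive integers, J = {⌊log_b x⌋ : x ∈ X}, and j_0 = min J. Assume j_0 ≥ 1 and that there is a positive integer l_0 such that every integer in [j_0, j_0 + l_0) belongs to J. Put d = ⌈j_0/l_0⌉. Then every b-dc-semigroup containing X contains every integer x with x ≥ b^{d·j_0}. -/

import Mathlib

/-- A set `G` of positive integers is a `b`-dc-semigroup if it is closed under
multiplication and closed with respect to the number of base-`b` digits. -/
def IsDCSemigroup (b : ℕ) (G : Set ℕ) : Prop :=
  (∀ x ∈ G, 0 < x) ∧
  (∀ x ∈ G, ∀ y ∈ G, x * y ∈ G) ∧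
  (∀ x ∈ G, ∀ y : ℕ, 0 < y → Nat.log b y = Nat.log b x → y ∈ G)

/-- Lower bound for the product of two "all-max-digit" numbers. -/
theorem dc_prodLB (b m n : ℕ) (hb : 2 ≤ b) (hm : 1 ≤ m) (hn : 1 ≤ n) :
    b ^ (m + n + 1) ≤ (b ^ (m+1) - 1) * (b ^ (n+1) - 1) := by
  have hA : (1:ℕ) ≤ b ^ (m+1) := Nat.one_le_pow _ _ (by omega)
  have hB : (1:ℕ) ≤ b ^ (n+1) := Nat.one_le_pow _ _ (by omega)
  have h1 : b ^ (m+1) ≤ b ^ (m+n) := Nat.pow_le_pow_right (by omega) (by omega)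
  have h2 : b ^ (n+1) ≤ b ^ (m+n) := Nat.pow_le_pow_right (by omega) (by omega)
  have h6 : 2 * b ^ (m+n) ≤ b ^ (m+n+1) := by
    have : b ^ (m+n+1) = b * b ^ (m+n) := by ring
    rw [this]; exact Nat.mul_le_mul_right _ hb
  have h7 : 2 * b ^ (m+n+1) ≤ b ^ (m+n+2) := by
    have : b ^ (m+n+2) = b * b ^ (m+n+1) := by ring
    rw [this]; exact Nat.mul_le_mul_right _ hb
  have h5 : (b ^ (m+1) - 1) * (b ^ (n+1) - 1) + b ^ (m+1) + b ^ (n+1)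
      = b ^ (m+n+2) + 1 := by
    have h : b ^ (m+1) * b ^ (n+1) = b ^ (m+n+2) := by ring
    zify [hA, hB]
    nlinarith [h]
  linarith

theorem stmt_13 (b : ℕ) (hb : 2 ≤ b) (X : Set ℕ) (hXne : X.Nonempty)
    (hXpos : ∀ x ∈ X, 0 < x)
    (J : Set ℕ) (hJ : J = {n : ℕ | ∃ x ∈ X, Nat.log b x = n})
    (j₀ : ℕ) (hj₀mem : j₀ ∈ J) (hj₀min : ∀ n ∈ J, j₀ ≤ n) (hj₀ : 1 ≤ j₀)
    (l₀ : ℕ) (hl₀pos : 0 < l₀)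
    (hfull : ∀ n : ℕ, j₀ ≤ n → n < j₀ + l₀ → n ∈ J)
    (d : ℕ) (hd : d = j₀ ⌈/⌉ l₀) :
    ∀ H : Set ℕ, IsDCSemigroup b H → X ⊆ H →
      ∀ x : ℕ, b ^ (d * j₀) ≤ x → x ∈ H := by
  intro H hH hXH x hx
  obtain ⟨hHpos, hHmul, hHdig⟩ := hH
  have hb1 : 1 < b := hb
  have hb0 : 0 < b := by omega
  -- base: powers b^n for n in the full interval are in H
  have hbase : ∀ n, j₀ ≤ n → n < j₀ + l₀ → b ^ n ∈ H := by
    intro n h1 h2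
    have hn : n ∈ J := hfull n h1 h2
    rw [hJ] at hn
    obtain ⟨y, hyX, hy⟩ := hn
    exact hHdig y (hXH hyX) _ (pow_pos hb0 n)
      (by rw [Nat.log_pow hb1, hy])
  -- additive closure of exponents
  have hadd : ∀ m n : ℕ, b ^ m ∈ H → b ^ n ∈ H → b ^ (m + n) ∈ H := by
    intro m n hm hn
    have := hHmul _ hm _ hn
    rwa [← pow_add] at this
  -- log of b^(k+1) - 1 is k
  have hlog : ∀ k : ℕ, Nat.log b (b ^ (k+1) - 1) = k := by
    intro k
    have hk : 0 < b ^ k := pow_pos hb0 k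
    have hkk : 2 * b ^ k ≤ b ^ (k+1) := by
      rw [pow_succ']; exact Nat.mul_le_mul_right _ hb
    refine Nat.log_eq_of_pow_le_of_lt_pow (by omega) (by omega)
  -- additive closure with a carry
  have hadd1 : ∀ m n : ℕ, 1 ≤ m → 1 ≤ n → b ^ m ∈ H → b ^ n ∈ H →
      b ^ (m + n + 1) ∈ H := by
    intro m n hm hn hmH hnH
    have hx1 : (0:ℕ) < b ^ (m+1) - 1 := by
      have h1 : 1 < b ^ (m+1) := Nat.one_lt_pow (by omega) hb1
      omega
    have hy1 : (0:ℕ) < b ^ (n+1) - 1 := by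
      have h1 : 1 < b ^ (n+1) := Nat.one_lt_pow (by omega) hb1
      omega
    have hxH : b ^ (m+1) - 1 ∈ H :=
      hHdig _ hmH _ hx1 (by rw [hlog m, Nat.log_pow hb1])
    have hyH : b ^ (n+1) - 1 ∈ H :=
      hHdig _ hnH _ hy1 (by rw [hlog n, Nat.log_pow hb1])
    have hprod : (b ^ (m+1) - 1) * (b ^ (n+1) - 1) ∈ H := hHmul _ hxH _ hyH
    have hlb : b ^ (m + n + 1) ≤ (b ^ (m+1) - 1) * (b ^ (n+1) - 1) :=
      dc_prodLB b m n hb hm hn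
    have hub : (b ^ (m+1) - 1) * (b ^ (n+1) - 1) < b ^ (m + n + 2) := by
      calc (b ^ (m+1) - 1) * (b ^ (n+1) - 1) ≤ b ^ (m+1) * (b ^ (n+1) - 1) :=
            Nat.mul_le_mul_right _ (Nat.sub_le _ _)
        _ < b ^ (m+1) * b ^ (n+1) := by
            have h1 : 1 < b ^ (n+1) := Nat.one_lt_pow (by omega) hb1
            have h2 : 0 < b ^ (m+1) := pow_pos hb0 _
            exact mul_lt_mul_of_pos_left (by omega) h2
        _ = b ^ (m + n + 2) := by ring
    have hlogp : Nat.log b ((b ^ (m+1) - 1) * (b ^ (n+1) - 1)) = m + n + 1 :=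
      Nat.log_eq_of_pow_le_of_lt_pow hlb hub
    exact hHdig _ hprod _ (pow_pos hb0 _)
      (by rw [hlogp, Nat.log_pow hb1])
  -- intervals: for k ≥ 1, all of [k*j₀, k*j₀ + k*l₀) is covered
  have hint : ∀ k, 1 ≤ k → ∀ n, k * j₀ ≤ n → n < k * j₀ + k * l₀ → b ^ n ∈ H := by
    intro k
    induction k with
    | zero => omega
    | succ k ih =>
      intro _ n h1 h2
      rcases Nat.eq_zero_or_pos k with hk | hk
      · subst hk
        exact hbase n (by simpa using h1) (by simpa using h2)
      · have e1 : (k+1) * j₀ = k * j₀ + j₀ := by ring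
        have e2 : (k+1) * l₀ = k * l₀ + l₀ := by ring
        have hkl : 1 ≤ k * l₀ := Nat.mul_pos hk hl₀pos
        have hkj : 1 ≤ k * j₀ := Nat.mul_pos hk (by omega)
        by_cases hc : n < k * j₀ + k * l₀ + j₀
        · -- n = (n - j₀) + j₀, with n - j₀ in the k-interval
          have hm := ih hk (n - j₀) (by omega) (by omega)
          have := hadd (n - j₀) j₀ hm (hbase j₀ le_rfl (by omega))
          rwa [Nat.sub_add_cancel (by omega)] at this
        · -- n = (k*j₀ + k*l₀ - 1) + (n - k*j₀ - k*l₀) + 1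
          have hm := ih hk (k * j₀ + k * l₀ - 1) (by omega) (by omega)
          have hc2 := hbase (n - k * j₀ - k * l₀) (by omega) (by omega)
          have := hadd1 (k * j₀ + k * l₀ - 1) (n - k * j₀ - k * l₀)
            (by omega) (by omega) hm hc2
          have heq : k * j₀ + k * l₀ - 1 + (n - k * j₀ - k * l₀) + 1 = n := by omega
          rwa [heq] at this
  -- every n ≥ d*j₀ is covered
  have hall : ∀ n, d * j₀ ≤ n → b ^ n ∈ H := by
    intro n hn
    have hd1 : 1 ≤ d := by
      rw [hd, Nat.ceilDiv_eq_add_pred_div]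
      exact (Nat.one_le_div_iff hl₀pos).mpr (by omega)
    set k := n / j₀ with hk
    have hk1 : k * j₀ ≤ n := Nat.div_mul_le_self n j₀
    have hk2 : n < k * j₀ + j₀ := by
      have h1 := Nat.div_add_mod n j₀
      have h2 := Nat.mod_lt n (show 0 < j₀ by omega)
      have h3 : j₀ * (n / j₀) = k * j₀ := by rw [hk]; ring
      omega
    have hdk : d ≤ k := by
      rw [hk]
      exact (Nat.le_div_iff_mul_le (by omega)).mpr hn
    have hdl : j₀ ≤ d * l₀ := by
      have := le_smul_ceilDiv (α := ℕ) (b := j₀) hl₀pos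
      rw [← hd] at this
      simpa [smul_eq_mul, Nat.mul_comm] using this
    have hkl : j₀ ≤ k * l₀ := le_trans hdl (Nat.mul_le_mul_right _ hdk)
    exact hint k (by omega) n hk1 (by omega)
  -- conclude
  have hxpos : 0 < x := lt_of_lt_of_le (pow_pos hb0 _) hx
  have hxlog : d * j₀ ≤ Nat.log b x := by
    have := Nat.log_mono_right (b := b) hx
    rwa [Nat.log_pow hb1] at this
  have hmem := hall (Nat.log b x) hxlog
  exact hHdig _ hmem x hxpos (by rw [Nat.log_pow hb1])
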